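/- Let P and Q be probability mass functions on a finite alphabet V. Define the speculative sampling procedure: draw x ~ Q, accept x with probability min(1, P(x)/Q(x)); upon rejection, sample a replacement token from the residual distribution R(y) = max(0, P(y) - Q(y)) / Σ_z max(0, P(z) - Q(z)) (assuming P ≠ Q so the normalizer is positive). Then the output token of this procedure is distributed exactly according to P. -/
import Mathlib

lemma spec_aux {P Q : ℝ} (hP : 0 ≤ P) (hQ : 0 ≤ Q) :
    Q * min 1 (P / Q) = min Q P := by
  rcases eq_or_lt_of_le hQ with h | h
  · simp [← h, min_eq_left hP]
  · rw [mul_min_of_nonneg _ _ h.le, mul_one, mul_div_cancel₀ _ h.ne']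

/-- Speculative sampling is exact: drawing `x ~ Q`, accepting with probability
`min 1 (P x / Q x)`, and on rejection resampling from the normalized residual
`max 0 (P - Q)`, yields output distributed exactly as `P`. -/
theorem speculative_sampling_exact
    {V : Type*} [Fintype V] (P Q : V → ℝ)
    (hP0 : ∀ x, 0 ≤ P x) (hQ0 : ∀ x, 0 ≤ Q x)
    (hP1 : ∑ x, P x = 1) (hQ1 : ∑ x, Q x = 1)
    (hne : P ≠ Q) (y : V) :
    Q y * min 1 (P y / Q y)
      + (∑ x, Q x * (1 - min 1 (P x / Q x)))
          * (max 0 (P y - Q y) / ∑ z, max 0 (P z - Q z)) = P y := by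
  have hrej : (∑ x, Q x * (1 - min 1 (P x / Q x))) = ∑ z, max 0 (P z - Q z) := by
    have h1 : ∀ x, Q x * (1 - min 1 (P x / Q x)) = Q x - min (Q x) (P x) := by
      intro x
      rw [mul_sub, mul_one, spec_aux (hP0 x) (hQ0 x)]
    have h2 : ∀ z, max 0 (P z - Q z) = P z - min (Q z) (P z) := by
      intro z
      rcases le_total (P z) (Q z) with h | h
      · rw [min_eq_right h, max_eq_left (by linarith)]; ring
      · rw [min_eq_left h, max_eq_right (by linarith)]
    simp only [h1, h2, Finset.sum_sub_distrib, hP1, hQ1]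
  have hSpos : 0 < ∑ z, max 0 (P z - Q z) := by
    obtain ⟨z, hz⟩ : ∃ z, Q z < P z := by
      by_contra h
      push_neg at h
      apply hne
      funext z
      have heq : ∀ w ∈ Finset.univ, P w = Q w := by
        apply Finset.sum_eq_sum_iff_of_le (fun w _ => h w) |>.mp
        rw [hP1, hQ1]
      exact (heq z (Finset.mem_univ z))
    refine Finset.sum_pos' (fun w _ => le_max_left _ _) ⟨z, Finset.mem_univ z, ?_⟩
    simp [lt_max_iff]; linarith
  rw [hrej, mul_comm (∑ z : V, 0 ⊔ (P z - Q z)), div_mul_cancel₀ _ hSpos.ne', spec_aux (hP0 y) (hQ0 y)]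
  rcases le_total (P y) (Q y) with h | h
  · rw [min_eq_right h, max_eq_left (by linarith), add_zero]
  · rw [min_eq_left h, max_eq_right (by linarith)]; ring
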